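/- Let A be an integer d×n matrix with columns a_1, …, a_n ∈ ℤ^d and let ρ : ker A → ℂˣ be a group homomorphism, with I_{A,ρ} ⊆ ℂ[x_1,…,x_n] the ideal generated by the binomials x^u − ρ(u−v)·x^v over all u, v ∈ ℕ^n with u − v ∈ ker A. Assume the cone C = ℝ_{≥0}a_1 + ⋯ + ℝ_{≥0}a_n satisfies C ∩ (−C) = {0}. Let σ ⊆ {1,…,n} be a subset for which there exists a linear functional φ : ℝ^d → ℝ with φ(a_j) = 0 for all j ∈ σ and φ(a_j) > 0 for all j ∉ σ. Then the ideal I^σ_{A,ρ} := I_{A,ρ} + ⟨x_j : j ∉ σ⟩ is a prime ideal of ℂ[x_1,…,x_n]. -/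

import Mathlib

open MvPolynomial

noncomputable instance : RootableBy ℂˣ ℕ :=
  rootableByOfPowLeftSurj _ _ (fun {k} hk u => by
    obtain ⟨z, hz⟩ := IsAlgClosed.exists_pow_nat_eq (u : ℂ) (Nat.pos_of_ne_zero hk)
    have hz0 : z ≠ 0 := by
      intro h
      rw [h, zero_pow hk] at hz
      exact u.ne_zero hz.symm
    exact ⟨Units.mk0 z hz0, Units.ext (by simpa using hz)⟩)

noncomputable instance : RootableBy ℂˣ ℤ := Group.rootableByIntOfRootableByNat _

noncomputable instance : DivisibleBy (Additive ℂˣ) ℤ where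
  div x k := Additive.ofMul (RootableBy.root x.toMul k)
  div_zero x := congrArg Additive.ofMul (RootableBy.root_zero _)
  div_cancel {k} x hk := by
    have : (RootableBy.root x.toMul k) ^ k = x.toMul := RootableBy.root_cancel _ hk
    simpa [← ofMul_zpow] using congrArg Additive.ofMul this

instance {d : ℕ} : IsDomain (AddMonoidAlgebra ℂ (Fin d → ℤ)) := NoZeroDivisors.to_isDomain _

noncomputable def psiA {d n : ℕ} (a : Fin n → Fin d → ℤ) (σ : Finset (Fin n))
    (r : (Fin n → ℤ) → ℂˣ) :
    MvPolynomial (Fin n) ℂ →+* AddMonoidAlgebra ℂ (Fin d → ℤ) :=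
  MvPolynomial.eval₂Hom AddMonoidAlgebra.singleZeroRingHom
    (fun j => if j ∈ σ then
      AddMonoidAlgebra.single (a j) ((r (Pi.single j 1) : ℂˣ) : ℂ) else 0)

example {d : ℕ} : NoZeroDivisors (AddMonoidAlgebra ℂ (Fin d → ℤ)) := inferInstance
example {d : ℕ} : Nontrivial (AddMonoidAlgebra ℂ (Fin d → ℤ)) := inferInstance

theorem psiA_X {d n : ℕ} (a : Fin n → Fin d → ℤ) (σ : Finset (Fin n))
    (r : (Fin n → ℤ) → ℂˣ) (j : Fin n) :
    psiA a σ r (X j) = if j ∈ σ then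
      AddMonoidAlgebra.single (a j) ((r (Pi.single j 1) : ℂˣ) : ℂ) else 0 := by
  simp [psiA]

theorem psiA_C {d n : ℕ} (a : Fin n → Fin d → ℤ) (σ : Finset (Fin n))
    (r : (Fin n → ℤ) → ℂˣ) (c : ℂ) :
    psiA a σ r (C c) = AddMonoidAlgebra.single 0 c := by
  simp [psiA]

theorem psiA_mon_bad {d n : ℕ} (a : Fin n → Fin d → ℤ) (σ : Finset (Fin n))
    (r : (Fin n → ℤ) → ℂˣ) (u : Fin n → ℕ) (j0 : Fin n) (hj0 : j0 ∉ σ) (hu : u j0 ≠ 0) :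
    psiA a σ r (∏ j, X j ^ u j) = 0 := by
  rw [map_prod]
  refine Finset.prod_eq_zero (Finset.mem_univ j0) ?_
  rw [map_pow, psiA_X, if_neg hj0, zero_pow hu]


theorem r_zero {n : ℕ} (r : (Fin n → ℤ) → ℂˣ)
    (hr : ∀ w w', r (w + w') = r w * r w') : r 0 = 1 := by
  have h := hr 0 0
  rw [add_zero] at h
  exact left_eq_mul.mp h

theorem r_sum {n : ℕ} (r : (Fin n → ℤ) → ℂˣ)
    (hr : ∀ w w', r (w + w') = r w * r w') {ι : Type*} (s : Finset ι)
    (f : ι → (Fin n → ℤ)) : r (∑ j ∈ s, f j) = ∏ j ∈ s, r (f j) := by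
  classical
  induction s using Finset.induction_on with
  | empty => simpa using r_zero r hr
  | insert x s hx ih => rw [Finset.sum_insert hx, Finset.prod_insert hx, hr, ih]

theorem r_nsmul {n : ℕ} (r : (Fin n → ℤ) → ℂˣ)
    (hr : ∀ w w', r (w + w') = r w * r w') (k : ℕ) (w : Fin n → ℤ) :
    r (k • w) = r w ^ k := by
  induction k with
  | zero => simpa using r_zero r hr
  | succ k ih => rw [succ_nsmul, hr _ _, ih, pow_succ]

theorem r_cast {n : ℕ} (r : (Fin n → ℤ) → ℂˣ)
    (hr : ∀ w w', r (w + w') = r w * r w') (u : Fin n → ℕ) :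
    ((r (fun j => (u j : ℤ)) : ℂˣ) : ℂ) = ∏ j, ((r (Pi.single j 1) : ℂˣ) : ℂ) ^ u j := by
  have hu : (fun j => (u j : ℤ)) = ∑ j, (u j) • Pi.single j 1 := by
    ext i
    simp [Finset.sum_apply, Pi.single_apply]
  rw [hu, r_sum r hr]
  simp_rw [r_nsmul r hr]
  push_cast
  rfl

theorem psiA_mon_good {d n : ℕ} (a : Fin n → Fin d → ℤ) (σ : Finset (Fin n))
    (r : (Fin n → ℤ) → ℂˣ) (hr : ∀ w w', r (w + w') = r w * r w')
    (u : Fin n → ℕ) (hu : ∀ j ∉ σ, u j = 0) :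
    psiA a σ r (∏ j, X j ^ u j) =
      AddMonoidAlgebra.single (∑ j, (u j : ℤ) • a j) ((r (fun j => (u j : ℤ)) : ℂˣ) : ℂ) := by
  rw [map_prod]
  have h1 : ∀ j : Fin n, psiA a σ r (X j ^ u j) =
      AddMonoidAlgebra.single (u j • a j) (((r (Pi.single j 1) : ℂˣ) : ℂ) ^ u j) := by
    intro j
    rw [map_pow, psiA_X]
    by_cases hj : j ∈ σ
    · rw [if_pos hj, AddMonoidAlgebra.single_pow]
    · rw [if_neg hj, hu j hj]
      simp [AddMonoidAlgebra.one_def]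
  simp_rw [h1]
  rw [AddMonoidAlgebra.prod_single, r_cast r hr]
  congr 1

theorem bad_transfer {d n : ℕ} (a : Fin n → Fin d → ℤ) (σ : Finset (Fin n))
    (φ : (Fin d → ℝ) →ₗ[ℝ] ℝ)
    (hφ0 : ∀ j ∈ σ, φ (fun i => (a j i : ℝ)) = 0)
    (hφpos : ∀ j ∉ σ, 0 < φ (fun i => (a j i : ℝ)))
    (u v : Fin n → ℕ) (h : (∑ j, ((u j : ℤ) - (v j : ℤ)) • a j) = 0)
    (j0 : Fin n) (hj0 : j0 ∉ σ) (hu : u j0 ≠ 0) :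
    ∃ j1, j1 ∉ σ ∧ v j1 ≠ 0 := by
  by_contra hc
  push_neg at hc
  have h1 : (∑ j, (((u j : ℝ) - (v j : ℝ)) • (fun i => (a j i : ℝ)))) = (0 : Fin d → ℝ) := by
    funext i
    have h2 : ((∑ j, ((u j : ℤ) - (v j : ℤ)) • a j) i : ℝ) = ((0 : Fin d → ℤ) i : ℝ) := by
      rw [h]
    simp only [Finset.sum_apply, Pi.smul_apply, Pi.zero_apply, smul_eq_mul] at h2 ⊢
    push_cast at h2
    convert h2 using 2
  have key : ∑ j, (((u j : ℝ) - (v j : ℝ)) * φ (fun i => (a j i : ℝ))) = 0 := by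
    have := congrArg φ h1
    rw [map_sum, map_zero] at this
    simpa [smul_eq_mul] using this
  -- split the sum over σ and its complement
  have hsplit : ∑ j ∈ σᶜ, (((u j : ℝ) - (v j : ℝ)) * φ (fun i => (a j i : ℝ))) = 0 := by
    rw [← key]
    symm
    rw [← Finset.sum_add_sum_compl σ]
    have : ∑ j ∈ σ, (((u j : ℝ) - (v j : ℝ)) * φ (fun i => (a j i : ℝ))) = 0 :=
      Finset.sum_eq_zero fun j hj => by rw [hφ0 j hj, mul_zero]
    rw [this, zero_add]
  have hv0 : ∀ j ∈ σᶜ, ((v j : ℝ) * φ (fun i => (a j i : ℝ))) = 0 := by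
    intro j hj
    rw [hc j (Finset.mem_compl.mp hj)]
    simp
  have hsum : ∑ j ∈ σᶜ, ((u j : ℝ) * φ (fun i => (a j i : ℝ))) = 0 := by
    rw [← hsplit]
    refine Finset.sum_congr rfl fun j hj => ?_
    rw [sub_mul]
    rw [hv0 j hj, sub_zero]
  have hle : (u j0 : ℝ) * φ (fun i => (a j0 i : ℝ)) ≤ 0 := by
    have := Finset.single_le_sum (f := fun j => (u j : ℝ) * φ (fun i => (a j i : ℝ)))
      (fun j hj => mul_nonneg (Nat.cast_nonneg _) (hφpos j (Finset.mem_compl.mp hj)).le)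
      (Finset.mem_compl.mpr hj0)
    rwa [hsum] at this
  have hpos : 0 < (u j0 : ℝ) * φ (fun i => (a j0 i : ℝ)) :=
    mul_pos (by exact_mod_cast Nat.pos_of_ne_zero hu) (hφpos j0 hj0)
  linarith

theorem exists_r {d n : ℕ} (a : Fin n → Fin d → ℤ) (ρ : (Fin n → ℤ) → ℂˣ)
    (hρ : ∀ w w' : Fin n → ℤ, (∑ j, w j • a j) = 0 → (∑ j, w' j • a j) = 0 →
      ρ (w + w') = ρ w * ρ w') :
    ∃ r : (Fin n → ℤ) → ℂˣ, (∀ w w', r (w + w') = r w * r w') ∧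
      (∀ w, (∑ j, w j • a j) = 0 → r w = ρ w) := by
  classical
  set K : AddSubgroup (Fin n → ℤ) :=
    { carrier := {w | ∑ j, w j • a j = 0}
      add_mem' := by
        intro x y hx hy
        simp only [Set.mem_setOf_eq] at *
        have : ∑ j, (x + y) j • a j = (∑ j, x j • a j) + ∑ j, y j • a j := by
          rw [← Finset.sum_add_distrib]
          exact Finset.sum_congr rfl fun j _ => by simp [add_smul]
        rw [this, hx, hy, add_zero]
      zero_mem' := by
        simp only [Set.mem_setOf_eq, Pi.zero_apply, zero_smul, Finset.sum_const_zero]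
      neg_mem' := by
        intro x hx
        simp only [Set.mem_setOf_eq] at *
        have : ∑ j, (-x) j • a j = -∑ j, x j • a j := by
          rw [← Finset.sum_neg_distrib]
          exact Finset.sum_congr rfl fun j _ => by simp [neg_smul]
        rw [this, hx, neg_zero] } with hK
  have hmemK : ∀ w, w ∈ K ↔ (∑ j, w j • a j) = 0 := fun w => Iff.rfl
  set g : K →+ Additive ℂˣ := AddMonoidHom.mk'
    (fun w => Additive.ofMul (ρ w))
    (fun x y => congrArg Additive.ofMul (hρ x y x.2 y.2)) with hg
  obtain ⟨χ, hχ⟩ := (Module.Baer.of_divisible (Additive ℂˣ)).extension_property_addMonoidHom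
    K.subtype Subtype.coe_injective g
  refine ⟨fun w => (χ w).toMul, ?_, ?_⟩
  · intro w w'
    simpa using congrArg Additive.toMul (χ.map_add w w')
  · intro w hw
    have := DFunLike.congr_fun hχ ⟨w, hw⟩
    simpa [hg] using congrArg Additive.toMul this

/-- With `a₁, …, aₙ ∈ ℤ^d` generating a pointed cone, `ρ` a
character on `ker A`, and `σ ⊆ {1,…,n}` a face (cut out by a linear functional
vanishing on `σ` and strictly positive off `σ`), the ideal
`I^σ_{A,ρ} = I_{A,ρ} + ⟨xⱼ : j ∉ σ⟩` is prime. -/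
theorem stmt_12 {d n : ℕ} (a : Fin n → (Fin d → ℤ))
    (hpointed : ∀ c c' : Fin n → ℝ, (∀ j, 0 ≤ c j) → (∀ j, 0 ≤ c' j) →
      (∑ j, c j • (fun i => (a j i : ℝ))) + (∑ j, c' j • (fun i => (a j i : ℝ))) = 0 →
      (∑ j, c j • (fun i => (a j i : ℝ))) = 0)
    (ρ : (Fin n → ℤ) → ℂˣ)
    (hρ0 : ρ 0 = 1)
    (hρ : ∀ w w' : Fin n → ℤ, (∑ j, w j • a j) = 0 → (∑ j, w' j • a j) = 0 →
      ρ (w + w') = ρ w * ρ w')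
    (I : Ideal (MvPolynomial (Fin n) ℂ))
    (hI : I = Ideal.span { f : MvPolynomial (Fin n) ℂ | ∃ u v : Fin n → ℕ,
      (∑ j, ((u j : ℤ) - (v j : ℤ)) • a j) = 0 ∧
      f = (∏ j, MvPolynomial.X j ^ u j) -
        ((ρ (fun j => (u j : ℤ) - (v j : ℤ)) : ℂ)) • ∏ j, MvPolynomial.X j ^ v j })
    (σ : Finset (Fin n)) (φ : (Fin d → ℝ) →ₗ[ℝ] ℝ)
    (hφ0 : ∀ j ∈ σ, φ (fun i => (a j i : ℝ)) = 0)
    (hφpos : ∀ j ∉ σ, 0 < φ (fun i => (a j i : ℝ))) :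
    (I + Ideal.span (MvPolynomial.X '' {j : Fin n | j ∉ σ})).IsPrime := by
  classical
  subst hI
  obtain ⟨r, hr_add, hr_mem⟩ := exists_r a ρ hρ
  set ψ := psiA a σ r with hψdef
  set T := Ideal.span { f : MvPolynomial (Fin n) ℂ | ∃ u v : Fin n → ℕ,
      (∑ j, ((u j : ℤ) - (v j : ℤ)) • a j) = 0 ∧
      f = (∏ j, MvPolynomial.X j ^ u j) -
        ((ρ (fun j => (u j : ℤ) - (v j : ℤ)) : ℂ)) • ∏ j, MvPolynomial.X j ^ v j }
      + Ideal.span (MvPolynomial.X '' {j : Fin n | j ∉ σ}) with hTdef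
  -- easy direction : T ≤ ker ψ
  have hTker : T ≤ RingHom.ker ψ := by
    rw [hTdef, Ideal.add_eq_sup]
    apply sup_le
    · rw [Ideal.span_le]
      rintro f ⟨u, v, huv, rfl⟩
      simp only [SetLike.mem_coe, RingHom.mem_ker]
      rw [map_sub, smul_eq_C_mul, map_mul, psiA_C]
      by_cases hbu : ∃ j0, j0 ∉ σ ∧ u j0 ≠ 0
      · obtain ⟨j0, hj0, hu0⟩ := hbu
        obtain ⟨j1, hj1, hv1⟩ := bad_transfer a σ φ hφ0 hφpos u v huv j0 hj0 hu0
        rw [psiA_mon_bad a σ r u j0 hj0 hu0, psiA_mon_bad a σ r v j1 hj1 hv1,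
          mul_zero, sub_zero]
      · push_neg at hbu
        have hgu : ∀ j ∉ σ, u j = 0 := fun j hj => by
          by_contra h; exact absurd h (not_not.mpr (hbu j hj))
        have hgv : ∀ j ∉ σ, v j = 0 := by
          intro j hj
          by_contra hvj
          have huv' : (∑ j, ((v j : ℤ) - (u j : ℤ)) • a j) = 0 := by
            have : ∑ j, ((v j : ℤ) - (u j : ℤ)) • a j
                = -∑ j, ((u j : ℤ) - (v j : ℤ)) • a j := by
              rw [← Finset.sum_neg_distrib]
              exact Finset.sum_congr rfl fun j _ => by rw [← neg_smul, neg_sub]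
            rw [this, huv, neg_zero]
          obtain ⟨j1, hj1, hu1⟩ := bad_transfer a σ φ hφ0 hφpos v u huv' j hj hvj
          exact hu1 (hgu j1 hj1)
        rw [psiA_mon_good a σ r hr_add u hgu, psiA_mon_good a σ r hr_add v hgv,
          AddMonoidAlgebra.single_mul_single, zero_add]
        have hAeq : (∑ j, ((u j : ℤ)) • a j) = ∑ j, ((v j : ℤ)) • a j := by
          rw [← sub_eq_zero, ← Finset.sum_sub_distrib, ← huv]
          exact Finset.sum_congr rfl fun j _ => by rw [sub_smul]
        have hceq : ((ρ (fun j => (u j : ℤ) - (v j : ℤ)) : ℂˣ) : ℂ)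
            * ((r (fun j => (v j : ℤ)) : ℂˣ) : ℂ) = ((r (fun j => (u j : ℤ)) : ℂˣ) : ℂ) := by
          rw [← hr_mem _ huv, ← Units.val_mul, ← hr_add]
          congr 2
          funext j
          simp only [Pi.add_apply]
          ring
        rw [hAeq, hceq, sub_self]
    · rw [Ideal.span_le]
      rintro f ⟨j, hj, rfl⟩
      simp only [Set.mem_setOf_eq] at hj
      simp only [SetLike.mem_coe, RingHom.mem_ker]
      rw [psiA_X, if_neg hj]
  -- hard direction : ker ψ ≤ T
  have hkerT : (RingHom.ker ψ : Ideal (MvPolynomial (Fin n) ℂ)) ≤ T := by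
    intro f hf
    rw [RingHom.mem_ker] at hf
    -- section of the monoid map on good monomials
    set sec : (Fin d → ℤ) → (Fin n →₀ ℕ) := fun q =>
      if h : ∃ m : Fin n →₀ ℕ, (∀ j ∉ σ, m j = 0) ∧ (∑ j, (m j : ℤ) • a j) = q
      then h.choose else 0 with hsecdef
    have hsec_spec : ∀ q, (∃ m : Fin n →₀ ℕ, (∀ j ∉ σ, m j = 0) ∧
        (∑ j, (m j : ℤ) • a j) = q) →
        (∀ j ∉ σ, sec q j = 0) ∧ (∑ j, ((sec q j : ℤ)) • a j) = q := by
      intro q hq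
      rw [hsecdef]
      simp only [dif_pos hq]
      exact hq.choose_spec
    set θ : (Fin n →₀ ℕ) → (Fin n → ℤ) :=
      fun m => fun j => (m j : ℤ) - (sec (∑ j, (m j : ℤ) • a j) j : ℤ) with hθdef
    -- monomial as a full product
    have hmonprod : ∀ (m : Fin n →₀ ℕ), (monomial m (1 : ℂ)) = ∏ j, X j ^ m j := by
      intro m
      rw [monomial_eq, map_one, one_mul, Finsupp.prod_fintype]
      intro j
      rw [pow_zero]
    -- bad monomials lie in T
    have key_bad : ∀ (m : Fin n →₀ ℕ), (¬ ∀ j ∉ σ, m j = 0) → ∀ c : ℂ,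
        (monomial m c : MvPolynomial (Fin n) ℂ) ∈ T := by
      intro m hm c
      push_neg at hm
      obtain ⟨j0, hj0, hmj0⟩ := hm
      obtain ⟨p, hp⟩ := (X_dvd_monomial (i := j0) (j := m) (r := c)).mpr (Or.inr hmj0)
      rw [hp]
      refine Ideal.mul_mem_right _ _ ?_
      rw [hTdef, Ideal.add_eq_sup]
      exact Ideal.mem_sup_right (Ideal.subset_span ⟨j0, hj0, rfl⟩)
    -- good monomials are congruent to their normal form modulo T
    have key_good : ∀ (m : Fin n →₀ ℕ), (∀ j ∉ σ, m j = 0) → ∀ c : ℂ,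
        (monomial m c : MvPolynomial (Fin n) ℂ)
          - (c * ((r (θ m) : ℂˣ) : ℂ)) • monomial (sec (∑ j, (m j : ℤ) • a j)) 1 ∈ T := by
      intro m hm c
      have hspec := hsec_spec _ ⟨m, hm, rfl⟩
      set m' := sec (∑ j, (m j : ℤ) • a j) with hm'def
      have hcond : (∑ j, (((m : Fin n → ℕ) j : ℤ) - ((m' : Fin n → ℕ) j : ℤ)) • a j) = 0 := by
        have : ∑ j, (((m : Fin n → ℕ) j : ℤ) - ((m' : Fin n → ℕ) j : ℤ)) • a j
            = (∑ j, ((m j : ℤ)) • a j) - ∑ j, ((m' j : ℤ)) • a j := by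
          rw [← Finset.sum_sub_distrib]
          exact Finset.sum_congr rfl fun j _ => by rw [sub_smul]
        rw [this, hspec.2, sub_self]
      have hgen : (∏ j, X j ^ (m : Fin n → ℕ) j)
          - ((ρ (fun j => ((m : Fin n → ℕ) j : ℤ) - ((m' : Fin n → ℕ) j : ℤ)) : ℂˣ) : ℂ)
            • ∏ j, X j ^ (m' : Fin n → ℕ) j ∈ T := by
        rw [hTdef, Ideal.add_eq_sup]
        exact Ideal.mem_sup_left (Ideal.subset_span ⟨(m : Fin n → ℕ), (m' : Fin n → ℕ), hcond, rfl⟩)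
      have hρθ : (ρ (fun j => ((m : Fin n → ℕ) j : ℤ) - ((m' : Fin n → ℕ) j : ℤ)) : ℂˣ) = r (θ m) := by
        rw [← hr_mem _ hcond]
      have heq : (monomial m c : MvPolynomial (Fin n) ℂ)
          - (c * ((r (θ m) : ℂˣ) : ℂ)) • monomial m' 1
          = c • ((∏ j, X j ^ (m : Fin n → ℕ) j)
            - ((ρ (fun j => ((m : Fin n → ℕ) j : ℤ) - ((m' : Fin n → ℕ) j : ℤ)) : ℂˣ) : ℂ)
              • ∏ j, X j ^ (m' : Fin n → ℕ) j) := by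
        rw [smul_sub, ← hmonprod, ← hmonprod, hρθ, smul_smul]
        congr 1
        simp [MvPolynomial.smul_monomial]
      rw [heq, smul_eq_C_mul]
      exact Ideal.mul_mem_left _ _ hgen
    -- the normal form of f
    set g : MvPolynomial (Fin n) ℂ := ∑ m ∈ f.support,
      (if ∀ j ∉ σ, m j = 0 then
        ((coeff m f) * ((r (θ m) : ℂˣ) : ℂ)) • monomial (sec (∑ j, (m j : ℤ) • a j)) 1
      else 0) with hgdef
    have hfg : f - g ∈ T := by
      rw [hgdef]
      nth_rewrite 1 [← MvPolynomial.support_sum_monomial_coeff f]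
      rw [← Finset.sum_sub_distrib]
      refine Ideal.sum_mem _ fun m hm => ?_
      by_cases h : ∀ j ∉ σ, m j = 0
      · rw [if_pos h]
        exact key_good m h _
      · rw [if_neg h, sub_zero]
        exact key_bad m h _
    have hψg : ψ g = 0 := by
      have h1 : ψ (f - g) = 0 := hTker hfg
      rw [map_sub, hf, zero_sub, neg_eq_zero] at h1
      exact h1
    -- group the normal form by fibers
    set S := f.support.filter (fun m => ∀ j ∉ σ, m j = 0) with hSdef
    set Q := S.image (fun m => ∑ j, (m j : ℤ) • a j) with hQdef
    have hQspec : ∀ q ∈ Q, (∀ j ∉ σ, sec q j = 0) ∧ (∑ j, ((sec q j : ℤ)) • a j) = q := by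
      intro q hq
      obtain ⟨m, hmS, hmq⟩ := Finset.mem_image.mp hq
      exact hsec_spec q ⟨m, (Finset.mem_filter.mp hmS).2, hmq⟩
    have hg3 : g = ∑ q ∈ Q,
        (∑ m ∈ S.filter (fun m => (∑ j, (m j : ℤ) • a j) = q),
          (coeff m f) * ((r (θ m) : ℂˣ) : ℂ)) • monomial (sec q) 1 := by
      rw [hgdef, ← Finset.sum_filter, ← hSdef,
        ← Finset.sum_fiberwise_of_maps_to (t := Q) (g := fun m => ∑ j, (m j : ℤ) • a j)
          (fun m hm => Finset.mem_image_of_mem _ hm)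
          (fun m => ((coeff m f) * ((r (θ m) : ℂˣ) : ℂ)) • monomial (sec (∑ j, (m j : ℤ) • a j)) 1)]
      refine Finset.sum_congr rfl fun q _ => ?_
      rw [Finset.sum_smul]
      refine Finset.sum_congr rfl fun m hm => ?_
      rw [(Finset.mem_filter.mp hm).2]
    have hψg2 : ψ g = ∑ q ∈ Q, AddMonoidAlgebra.single q
        ((∑ m ∈ S.filter (fun m => (∑ j, (m j : ℤ) • a j) = q),
          (coeff m f) * ((r (θ m) : ℂˣ) : ℂ)) * ((r (fun j => (sec q j : ℤ)) : ℂˣ) : ℂ)) := by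
      rw [hg3, map_sum]
      refine Finset.sum_congr rfl fun q hq => ?_
      rw [smul_eq_C_mul, map_mul, psiA_C, hmonprod,
        psiA_mon_good a σ r hr_add _ (fun j hj => (hQspec q hq).1 j hj),
        (hQspec q hq).2, AddMonoidAlgebra.single_mul_single, zero_add]
    have hC0 : ∀ q ∈ Q,
        (∑ m ∈ S.filter (fun m => (∑ j, (m j : ℤ) • a j) = q),
          (coeff m f) * ((r (θ m) : ℂˣ) : ℂ)) = 0 := by
      intro q hq
      have hz : (∑ q' ∈ Q, Finsupp.single q'
          ((∑ m ∈ S.filter (fun m => (∑ j, (m j : ℤ) • a j) = q'),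
            (coeff m f) * ((r (θ m) : ℂˣ) : ℂ)) * ((r (fun j => (sec q' j : ℤ)) : ℂˣ) : ℂ)))
          = (0 : (Fin d → ℤ) →₀ ℂ) := by
        have := congrArg AddMonoidAlgebra.coeff (hψg2.symm.trans hψg)
        simp only [AddMonoidAlgebra.coeff_sum, AddMonoidAlgebra.coeff_single, AddMonoidAlgebra.coeff_zero] at this
        exact this
      have h0 := DFunLike.congr_fun hz q
      simp only [Finsupp.coe_finset_sum, Finset.sum_apply, Finsupp.coe_zero, Pi.zero_apply] at h0
      rw [Finset.sum_eq_single q (fun q' _ hne => Finsupp.single_eq_of_ne' hne)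
        (fun hq' => absurd hq hq'), Finsupp.single_eq_same] at h0
      rcases mul_eq_zero.mp h0 with h | h
      · exact h
      · exact absurd h (Units.ne_zero _)
    have hg0 : g = 0 := by
      rw [hg3]
      exact Finset.sum_eq_zero fun q hq => by rw [hC0 q hq, zero_smul]
    rw [hg0, sub_zero] at hfg
    exact hfg
  have hT : T = RingHom.ker ψ := le_antisymm hTker hkerT
  rw [hT]
  exact RingHom.ker_isPrime ψ
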